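/- Let d ≥ 1, σ¹, …, σ^d ∈ ℝ, (ρ_{ij})_{1≤i,j≤d} a real matrix, and (x₀, p₀) ∈ ℝ^d × ℝ^d. For l = 1, …, d define c^l = σ^l Σ_{i=1}^d ρ_{li} σ^i p₀^i x₀^i and set x^l(t) = x₀^l e^{c^l t}, p^l(t) = p₀^l e^{−c^l t}. Then (x(t), p(t)) solves the Hamiltonian ODE system ẋ^l(t) = σ^l x^l(t) Σ_{i=1}^d ρ_{li} σ^i p^i(t) x^i(t), ṗ^l(t) = −σ^l p^l(t) Σ_{i=1}^d ρ_{li} σ^i p^i(t) x^i(t) with (x(0), p(0)) = (x₀, p₀). -/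

import Mathlib

open Real

/-- With `c^l = σ^l Σᵢ ρ_{li} σ^i p₀^i x₀^i`, the explicit formulas
`x^l(t) = x₀^l e^{c^l t}`, `p^l(t) = p₀^l e^{-c^l t}` solve the `d`-dimensional
Black–Scholes Hamiltonian ODEs with initial condition `(x₀, p₀)`. -/
theorem stmt_13 (d : ℕ) (hd : 1 ≤ d) (σ : Fin d → ℝ) (ρ : Matrix (Fin d) (Fin d) ℝ)
    (x₀ p₀ : Fin d → ℝ) :
    let c : Fin d → ℝ := fun l => σ l * ∑ i : Fin d, ρ l i * σ i * p₀ i * x₀ i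
    let x : ℝ → Fin d → ℝ := fun t l => x₀ l * Real.exp (c l * t)
    let p : ℝ → Fin d → ℝ := fun t l => p₀ l * Real.exp (-(c l) * t)
    (∀ (l : Fin d) (t : ℝ),
      HasDerivAt (fun s => x s l)
        (σ l * x t l * ∑ i : Fin d, ρ l i * σ i * p t i * x t i) t) ∧
    (∀ (l : Fin d) (t : ℝ),
      HasDerivAt (fun s => p s l)
        (-(σ l * p t l * ∑ i : Fin d, ρ l i * σ i * p t i * x t i)) t) ∧
    x 0 = x₀ ∧ p 0 = p₀ := by
  intro c x p
  have hsum : ∀ (l : Fin d) (t : ℝ),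
      (∑ i : Fin d, ρ l i * σ i * p t i * x t i)
        = ∑ i : Fin d, ρ l i * σ i * p₀ i * x₀ i := by
    intro l t
    refine Finset.sum_congr rfl fun i _ => ?_
    show ρ l i * σ i * (p₀ i * Real.exp (-(c i) * t)) * (x₀ i * Real.exp (c i * t))
        = ρ l i * σ i * p₀ i * x₀ i
    have h : Real.exp (-(c i) * t) * Real.exp (c i * t) = 1 := by
      rw [← Real.exp_add]; ring_nf; exact Real.exp_zero
    linear_combination ρ l i * σ i * p₀ i * x₀ i * h
  have hd1 : ∀ (a b t : ℝ), HasDerivAt (fun s => a * Real.exp (b * s))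
      (a * (b * Real.exp (b * t))) t := by
    intro a b t
    have h := (((hasDerivAt_id t).const_mul b).exp).const_mul a
    simp only [id] at h
    refine h.congr_deriv ?_
    ring
  refine ⟨fun l t => ?_, fun l t => ?_, ?_, ?_⟩
  · have := hd1 (x₀ l) (c l) t
    convert this using 1
    show σ l * (x₀ l * Real.exp (c l * t)) * _ = _
    rw [hsum l t]; show σ l * (x₀ l * Real.exp (c l * t)) *
      (∑ i : Fin d, ρ l i * σ i * p₀ i * x₀ i) = _
    simp only [c]; ring
  · have := hd1 (p₀ l) (-(c l)) t
    convert this using 1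
    show -(σ l * (p₀ l * Real.exp (-(c l) * t)) * _) = _
    rw [hsum l t]
    simp only [c]; ring
  · funext l; simp [x]
  · funext l; simp [p]
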